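/- arXiv:0804.1018 — 2 statements merged into one kernel-verified Lean document; each statement's English description precedes it below -/
import Mathlib

section
/- Let d ≥ 1, let ω : ℝ^d → [0,∞) be a radial nonnegative bounded measurable weight, and let f : ℝ^d → ℂ be a radial Schwartz function. Then for every x ∈ ℝ^d, |x|^{d-1} ω(x)^{1/2} |f(x)|^2 ≤ C · ‖f‖_{L^2(ℝ^d)} · ‖ω^{1/2} ∇f‖_{L^2(ℝ^d)}, where C depends only on d and additionally ω is assumed to satisfy ω(x) ≤ C' ω(y) whenever |x| ≤ |y| (monotonicity up to constants). -/
open MeasureTheory Real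

private lemma integral_cauchy_schwarz' {α : Type*} [MeasurableSpace α] {μ : Measure α}
    {a b : α → ℝ} (ha0 : 0 ≤ᵐ[μ] a) (hb0 : 0 ≤ᵐ[μ] b)
    (ham : AEStronglyMeasurable a μ) (hbm : AEStronglyMeasurable b μ)
    (ha2 : Integrable (fun x => a x ^ 2) μ) (hb2 : Integrable (fun x => b x ^ 2) μ) :
    ∫ x, a x * b x ∂μ ≤ Real.sqrt (∫ x, a x ^ 2 ∂μ) * Real.sqrt (∫ x, b x ^ 2 ∂μ) := by
  have hpq : Real.HolderConjugate 2 2 := by rw [Real.holderConjugate_iff]; norm_num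
  have h2 : (ENNReal.ofReal (2:ℝ)) = 2 := by norm_num
  have hma : MemLp a (ENNReal.ofReal (2:ℝ)) μ := by
    rw [h2]; exact (memLp_two_iff_integrable_sq ham).2 ha2
  have hmb : MemLp b (ENNReal.ofReal (2:ℝ)) μ := by
    rw [h2]; exact (memLp_two_iff_integrable_sq hbm).2 hb2
  have key := MeasureTheory.integral_mul_le_Lp_mul_Lq_of_nonneg hpq ha0 hb0 hma hmb
  have hpow : ∀ y : ℝ, y ^ (2:ℝ) = y ^ (2:ℕ) := fun y => by
    rw [show (2:ℝ) = ((2:ℕ):ℝ) by norm_num, Real.rpow_natCast]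
  simp only [hpow] at key
  calc ∫ x, a x * b x ∂μ ≤ (∫ x, a x ^ 2 ∂μ) ^ (1/2:ℝ) * (∫ x, b x ^ 2 ∂μ) ^ (1/2:ℝ) := key
    _ = Real.sqrt (∫ x, a x ^ 2 ∂μ) * Real.sqrt (∫ x, b x ^ 2 ∂μ) := by
        rw [Real.sqrt_eq_rpow, Real.sqrt_eq_rpow]

private lemma radial_fderiv_norm_le {E F : Type*} [NormedAddCommGroup E] [InnerProductSpace ℝ E]
    [FiniteDimensional ℝ E] [NormedAddCommGroup F] [NormedSpace ℝ F]
    {f : E → F} (hf : Differentiable ℝ f)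
    (hrad : ∀ x y : E, ‖x‖ = ‖y‖ → f x = f y) {x y : E} (h : ‖x‖ = ‖y‖) :
    ‖fderiv ℝ f x‖ ≤ ‖fderiv ℝ f y‖ := by
  set A : E ≃ₗᵢ[ℝ] E := Submodule.reflection (ℝ ∙ (x - y))ᗮ with hA
  have hxy : A x = y := Submodule.reflection_sub h
  have hcomp : f ∘ A = f := funext fun z => hrad _ _ (A.norm_map z)
  have h1 : fderiv ℝ f x = (fderiv ℝ f (A x)).comp (fderiv ℝ A x) := by
    conv_lhs => rw [← hcomp]
    exact fderiv_comp x (hf _) A.differentiableAt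
  have hAnorm : ‖(A : E →L[ℝ] E)‖ ≤ 1 :=
    ContinuousLinearMap.opNorm_le_bound _ zero_le_one fun v => by
      simp [A.norm_map]
  calc ‖fderiv ℝ f x‖ = ‖(fderiv ℝ f y).comp (A : E →L[ℝ] E)‖ := by
        rw [h1, A.fderiv, hxy]
    _ ≤ ‖fderiv ℝ f y‖ * ‖(A : E →L[ℝ] E)‖ := ContinuousLinearMap.opNorm_comp_le _ _
    _ ≤ ‖fderiv ℝ f y‖ * 1 := mul_le_mul_of_nonneg_left hAnorm (norm_nonneg _)
    _ = ‖fderiv ℝ f y‖ := mul_one _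

private lemma radial_fderiv_norm_eq {E F : Type*} [NormedAddCommGroup E] [InnerProductSpace ℝ E]
    [FiniteDimensional ℝ E] [NormedAddCommGroup F] [NormedSpace ℝ F]
    {f : E → F} (hf : Differentiable ℝ f)
    (hrad : ∀ x y : E, ‖x‖ = ‖y‖ → f x = f y) {x y : E} (h : ‖x‖ = ‖y‖) :
    ‖fderiv ℝ f x‖ = ‖fderiv ℝ f y‖ :=
  le_antisymm (radial_fderiv_norm_le hf hrad h) (radial_fderiv_norm_le hf hrad h.symm)

private lemma pow_le_one_add_pow {r : ℝ} (hr : 0 ≤ r) (d : ℕ) :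
    r ^ (d - 1) ≤ 1 + r ^ (d + 1) := by
  rcases le_total r 1 with h | h
  · have : r ^ (d-1) ≤ 1 := pow_le_one₀ hr h
    nlinarith [pow_nonneg hr (d+1)]
  · have : r ^ (d-1) ≤ r ^ (d+1) := pow_le_pow_right₀ h (by omega)
    nlinarith

set_option maxHeartbeats 2000000 in
/-- Weighted radial Sobolev embedding on `ℝ^d`. -/
theorem weighted_radial_sobolev (d : ℕ) (hd : 1 ≤ d) :
    ∃ C : ℝ, 0 < C ∧
      ∀ (ω : EuclideanSpace ℝ (Fin d) → ℝ) (f : SchwartzMap (EuclideanSpace ℝ (Fin d)) ℂ)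
        (C' B : ℝ), 0 < C' →
        Measurable ω → (∀ x, 0 ≤ ω x) → (∀ x, ω x ≤ B) →
        (∀ x y : EuclideanSpace ℝ (Fin d), ‖x‖ = ‖y‖ → ω x = ω y) →
        (∀ x y : EuclideanSpace ℝ (Fin d), ‖x‖ = ‖y‖ → f x = f y) →
        (∀ x y : EuclideanSpace ℝ (Fin d), ‖x‖ ≤ ‖y‖ → ω x ≤ C' * ω y) →
        ∀ x : EuclideanSpace ℝ (Fin d),
          ‖x‖ ^ (d - 1) * Real.sqrt (ω x) * ‖f x‖ ^ 2
            ≤ C * C' * Real.sqrt (∫ y, ‖f y‖ ^ 2) *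
                Real.sqrt (∫ y, ω y * ‖fderiv ℝ (fun z => f z) y‖ ^ 2) := by
  have hd0 : 0 < d := hd
  set e : EuclideanSpace ℝ (Fin d) := EuclideanSpace.single (⟨0, hd0⟩ : Fin d) (1:ℝ) with he_def
  have he : ‖e‖ = 1 := by rw [he_def, EuclideanSpace.norm_single]; norm_num
  haveI : Nontrivial (EuclideanSpace ℝ (Fin d)) := by
    refine ⟨⟨e, 0, fun h => ?_⟩⟩
    rw [← norm_eq_zero (a := e)] at h
    rw [he] at h; norm_num at h
  set V : ℝ := (volume (Metric.ball (0 : EuclideanSpace ℝ (Fin d)) 1)).toReal with hV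
  have hVpos : 0 < V := by
    apply ENNReal.toReal_pos
    · exact (Metric.measure_ball_pos volume 0 one_pos).ne'
    · exact measure_ball_lt_top.ne
  have hdV : 0 < (d:ℝ) * V := by positivity
  have polar : ∀ g : ℝ → ℝ, ∀ G : EuclideanSpace ℝ (Fin d) → ℝ, (∀ y, G y = g ‖y‖) →
      ∫ y, G y = (d:ℝ) * V * ∫ r in Set.Ioi (0:ℝ), r ^ (d-1) * g r := by
    intro g G hG
    have h1 := integral_fun_norm_addHaar (volume : Measure (EuclideanSpace ℝ (Fin d))) g
    calc ∫ y, G y = ∫ y : EuclideanSpace ℝ (Fin d), g ‖y‖ := by simp_rw [hG]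
      _ = (d:ℝ) * V * ∫ r in Set.Ioi (0:ℝ), r ^ (d-1) * g r := by
          rw [h1, finrank_euclideanSpace_fin]
          simp_rw [smul_eq_mul, nsmul_eq_mul, mul_assoc]
          rfl
  refine ⟨2 / ((d:ℝ) * V), by positivity, ?_⟩
  intro ω f C' B hC' hωm hω0 hωB hωrad hfrad hωmono x
  -- trivial case : ω ≡ 0
  by_cases hzero : ∀ z, ω z = 0
  · rw [hzero x, Real.sqrt_zero, mul_zero, zero_mul]
    have h1 : 0 ≤ 2 / ((d:ℝ) * V) * C' := by positivity
    exact mul_nonneg (mul_nonneg h1 (Real.sqrt_nonneg _)) (Real.sqrt_nonneg _)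
  push_neg at hzero
  obtain ⟨z0, hz0⟩ := hzero
  have hC'1 : 1 ≤ C' := by
    have h1 := hωmono z0 z0 le_rfl
    have h2 : 0 < ω z0 := lt_of_le_of_ne (hω0 z0) (Ne.symm hz0)
    nlinarith
  have hB0 : 0 ≤ B := le_trans (hω0 0) (hωB 0)
  -- decay constants
  obtain ⟨C0, hC0pos, hC0⟩ := f.decay 0 0
  have hC0' : ∀ y, ‖f y‖ ≤ C0 := fun y => by
    simpa [norm_iteratedFDeriv_zero] using hC0 y
  obtain ⟨C2, hC2pos, hC2⟩ := f.decay 2 0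
  have hC2' : ∀ y : EuclideanSpace ℝ (Fin d), ‖y‖^2 * ‖f y‖ ≤ C2 := fun y => by
    simpa [norm_iteratedFDeriv_zero] using hC2 y
  obtain ⟨Cd, hCdpos, hCd⟩ := f.decay (d+1) 0
  have hCd' : ∀ y : EuclideanSpace ℝ (Fin d), ‖y‖^(d+1) * ‖f y‖ ≤ Cd := fun y => by
    simpa [norm_iteratedFDeriv_zero] using hCd y
  set Df : EuclideanSpace ℝ (Fin d) → (EuclideanSpace ℝ (Fin d) →L[ℝ] ℂ) :=
    fun y => fderiv ℝ f y with hDf_def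
  have hitd : ∀ y : EuclideanSpace ℝ (Fin d), ‖iteratedFDeriv ℝ 1 (⇑f) y‖ = ‖Df y‖ := by
    intro y
    rw [show (1:ℕ) = 0 + 1 from rfl, ← norm_iteratedFDeriv_fderiv, norm_iteratedFDeriv_zero]
  obtain ⟨D0, hD0pos, hD0⟩ := f.decay 0 1
  have hD0' : ∀ y, ‖Df y‖ ≤ D0 := fun y => by
    have := hD0 y; rw [hitd y] at this; simpa using this
  obtain ⟨Dd, hDdpos, hDd⟩ := f.decay (d+1) 1
  have hDd' : ∀ y : EuclideanSpace ℝ (Fin d), ‖y‖^(d+1) * ‖Df y‖ ≤ Dd := fun y => by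
    have := hDd y; rwa [hitd y] at this
  -- 1D reductions
  set u : ℝ → ℂ := fun r => f (r • e) with hu_def
  set u' : ℝ → ℂ := fun r => Df (r • e) e with hu'_def
  have hnorm_smul : ∀ r : ℝ, 0 ≤ r → ‖r • e‖ = r := fun r hr => by
    rw [norm_smul, he, mul_one, Real.norm_eq_abs, abs_of_nonneg hr]
  have hDfc : Continuous Df := (f.smooth ⊤).continuous_fderiv (by simp)
  have hsmulc : Continuous (fun r : ℝ => r • e) := continuous_id.smul continuous_const
  have huc : Continuous u := f.continuous.comp hsmulc
  have hu'c : Continuous u' := (hDfc.comp hsmulc).clm_apply continuous_const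
  have hu'deriv : ∀ r : ℝ, HasDerivAt u (u' r) r := by
    intro r
    have h1 : HasDerivAt (fun s : ℝ => s • e) e r := by
      simpa using (hasDerivAt_id r).smul_const e
    exact (f.differentiableAt.hasFDerivAt).comp_hasDerivAt r h1
  set φ : ℝ → ℝ := fun r => ‖u r‖^2 with hφ_def
  set ψ : ℝ → ℝ := fun r => 2 * (inner ℝ (u r) (u' r) : ℝ) with hψ_def
  have hφψ : ∀ r : ℝ, HasDerivAt φ (ψ r) r := by
    intro r
    have h := (hu'deriv r).inner ℝ (hu'deriv r)
    have h2 : (fun t => (inner ℝ (u t) (u t) : ℝ)) = φ :=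
      funext fun t => real_inner_self_eq_norm_sq (u t)
    rw [h2] at h
    have h3 : (inner ℝ (u r) (u' r) : ℝ) + (inner ℝ (u' r) (u r) : ℝ) = ψ r := by
      simp only [hψ_def, real_inner_comm (u' r) (u r)]; ring
    rw [← h3]
    exact h
  -- decay of φ at infinity
  obtain ⟨C1, hC1pos, hC1⟩ := f.decay 1 0
  have hC1' : ∀ y : EuclideanSpace ℝ (Fin d), ‖y‖ * ‖f y‖ ≤ C1 := fun y => by
    simpa [norm_iteratedFDeriv_zero] using hC1 y
  have hφ0 : Filter.Tendsto φ Filter.atTop (nhds 0) := by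
    have hg : Filter.Tendsto (fun r : ℝ => C1^2 / r^2) Filter.atTop (nhds 0) :=
      Filter.Tendsto.div_atTop tendsto_const_nhds (Filter.tendsto_pow_atTop two_ne_zero)
    refine squeeze_zero' (Filter.Eventually.of_forall fun r => by
      simp only [hφ_def]; positivity) ?_ hg
    filter_upwards [Filter.eventually_ge_atTop (1:ℝ)] with r hr
    have hr0 : (0:ℝ) < r := lt_of_lt_of_le one_pos hr
    have h1 : r * ‖u r‖ ≤ C1 := by
      have h := hC1' (r • e); rwa [hnorm_smul r hr0.le] at h
    have h2 : ‖u r‖ ≤ C1 / r := (le_div_iff₀ hr0).2 (by linarith [h1, mul_comm r ‖u r‖])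
    calc φ r = ‖u r‖^2 := rfl
      _ ≤ (C1/r)^2 := by
          apply pow_le_pow_left₀ (norm_nonneg _) h2
      _ = C1^2/r^2 := div_pow _ _ _
  -- generic integrability from 1/(1+r^2) bounds
  have hbound_int : ∀ (M : ℝ) (s : Set ℝ) (g : ℝ → ℝ), MeasurableSet s →
      AEStronglyMeasurable g (volume.restrict s) →
      (∀ r ∈ s, |g r| ≤ M * (1 + r^2)⁻¹) → IntegrableOn g s := by
    intro M s g hs hm hb
    refine Integrable.mono' ((integrable_inv_one_add_sq.const_mul M).restrict) hm ?_
    refine (ae_restrict_iff' hs).2 (Filter.Eventually.of_forall fun r hr => ?_)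
    simpa [Real.norm_eq_abs] using hb r hr
  -- the main 1D integrands
  set A : ℝ → ℝ := fun r => r^(d-1) * ‖u r‖^2 with hA_def
  set Bf : ℝ → ℝ := fun r => r^(d-1) * (ω (r • e) * ‖Df (r • e)‖^2) with hBf_def
  set av : ℝ → ℝ := fun r => Real.sqrt (r^(d-1)) * ‖u r‖ with hav_def
  set bv : ℝ → ℝ := fun r => Real.sqrt (r^(d-1)) * (Real.sqrt (ω (r • e)) * ‖Df (r • e)‖)
    with hbv_def
  have hωe : Measurable (fun r : ℝ => ω (r • e)) := hωm.comp hsmulc.measurable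
  have hDfe : Continuous (fun r : ℝ => ‖Df (r • e)‖) := (hDfc.comp hsmulc).norm
  -- pointwise facts used repeatedly
  have hu'le : ∀ r : ℝ, ‖u' r‖ ≤ ‖Df (r • e)‖ := by
    intro r
    calc ‖u' r‖ = ‖Df (r • e) e‖ := rfl
      _ ≤ ‖Df (r • e)‖ * ‖e‖ := ContinuousLinearMap.le_opNorm _ _
      _ = ‖Df (r • e)‖ := by rw [he, mul_one]
  have hpow_split : ∀ r : ℝ, r^2 * r^(d-1) = r^(d+1) := by
    intro r
    rw [show d+1 = (d-1)+2 by omega, pow_add]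
    ring
  -- bound for A
  have hA_bound : ∀ r ∈ Set.Ioi (0:ℝ), |A r| ≤ (C0^2 + 2*(Cd*C0)) * (1 + r^2)⁻¹ := by
    intro r hr
    have hr0 : (0:ℝ) < r := hr
    have hn0 : (0:ℝ) ≤ ‖u r‖ := norm_nonneg _
    have hn1 : ‖u r‖ ≤ C0 := hC0' _
    have hnd : r^(d+1) * ‖u r‖ ≤ Cd := by
      have h := hCd' (r • e); rwa [hnorm_smul r hr0.le] at h
    have hple : r^(d-1) ≤ 1 + r^(d+1) := pow_le_one_add_pow hr0.le d
    have htn : (0:ℝ) ≤ r^(d+1) := by positivity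
    have hsn : (0:ℝ) ≤ r^(d-1) := by positivity
    have key : (1 + r^2) * A r ≤ C0^2 + 2*(Cd*C0) := by
      have expand : (1 + r^2) * A r = r^(d-1) * ‖u r‖^2 + r^(d+1) * ‖u r‖^2 := by
        simp only [hA_def]
        rw [← hpow_split r]; ring
      rw [expand]
      have hn2 : ‖u r‖^2 ≤ C0^2 := pow_le_pow_left₀ hn0 hn1 2
      have h1 : r^(d+1) * ‖u r‖^2 ≤ Cd * C0 := by
        calc r^(d+1) * ‖u r‖^2 = (r^(d+1) * ‖u r‖) * ‖u r‖ := by ring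
          _ ≤ Cd * C0 := mul_le_mul hnd hn1 hn0 hCdpos.le
      have h2 : r^(d-1) * ‖u r‖^2 ≤ ‖u r‖^2 + r^(d+1) * ‖u r‖^2 := by
        calc r^(d-1) * ‖u r‖^2 ≤ (1 + r^(d+1)) * ‖u r‖^2 :=
              mul_le_mul_of_nonneg_right hple (sq_nonneg _)
          _ = ‖u r‖^2 + r^(d+1) * ‖u r‖^2 := by ring
      linarith
    have hApos : (0:ℝ) ≤ A r := by simp only [hA_def]; positivity
    rw [abs_of_nonneg hApos, ← div_eq_mul_inv, le_div_iff₀ (by positivity)]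
    linarith [key, mul_comm (A r) (1+r^2)]
  -- bound for Bf
  have hBf_bound : ∀ r ∈ Set.Ioi (0:ℝ), |Bf r| ≤ (B*(D0^2 + 2*(Dd*D0))) * (1 + r^2)⁻¹ := by
    intro r hr
    have hr0 : (0:ℝ) < r := hr
    have hn0 : (0:ℝ) ≤ ‖Df (r • e)‖ := norm_nonneg _
    have hn1 : ‖Df (r • e)‖ ≤ D0 := hD0' _
    have hnd : r^(d+1) * ‖Df (r • e)‖ ≤ Dd := by
      have h := hDd' (r • e); rwa [hnorm_smul r hr0.le] at h
    have hple : r^(d-1) ≤ 1 + r^(d+1) := pow_le_one_add_pow hr0.le d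
    have hω1 : 0 ≤ ω (r • e) := hω0 _
    have hω2 : ω (r • e) ≤ B := hωB _
    have key : (1 + r^2) * (r^(d-1) * ‖Df (r • e)‖^2) ≤ D0^2 + 2*(Dd*D0) := by
      have expand : (1 + r^2) * (r^(d-1) * ‖Df (r • e)‖^2)
          = r^(d-1) * ‖Df (r • e)‖^2 + r^(d+1) * ‖Df (r • e)‖^2 := by
        rw [← hpow_split r]; ring
      rw [expand]
      have hn2 : ‖Df (r • e)‖^2 ≤ D0^2 := pow_le_pow_left₀ hn0 hn1 2
      have h1 : r^(d+1) * ‖Df (r • e)‖^2 ≤ Dd * D0 := by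
        calc r^(d+1) * ‖Df (r • e)‖^2 = (r^(d+1) * ‖Df (r • e)‖) * ‖Df (r • e)‖ := by ring
          _ ≤ Dd * D0 := mul_le_mul hnd hn1 hn0 hDdpos.le
      have h2 : r^(d-1) * ‖Df (r • e)‖^2 ≤ ‖Df (r • e)‖^2 + r^(d+1) * ‖Df (r • e)‖^2 := by
        calc r^(d-1) * ‖Df (r • e)‖^2 ≤ (1 + r^(d+1)) * ‖Df (r • e)‖^2 :=
              mul_le_mul_of_nonneg_right hple (sq_nonneg _)
          _ = ‖Df (r • e)‖^2 + r^(d+1) * ‖Df (r • e)‖^2 := by ring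
      linarith
    have hBpos : (0:ℝ) ≤ Bf r := by simp only [hBf_def]; positivity
    have key2 : (1 + r^2) * Bf r ≤ B*(D0^2 + 2*(Dd*D0)) := by
      have e1 : Bf r = ω (r • e) * (r^(d-1) * ‖Df (r • e)‖^2) := by
        simp only [hBf_def]; ring
      have h3 : (0:ℝ) ≤ (1 + r^2) * (r^(d-1) * ‖Df (r • e)‖^2) := by positivity
      calc (1 + r^2) * Bf r = ω (r • e) * ((1 + r^2) * (r^(d-1) * ‖Df (r • e)‖^2)) := by
            rw [e1]; ring
        _ ≤ B * (D0^2 + 2*(Dd*D0)) := by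
            apply mul_le_mul hω2 key h3 hB0
    rw [abs_of_nonneg hBpos, ← div_eq_mul_inv, le_div_iff₀ (by positivity)]
    linarith [key2, mul_comm (Bf r) (1+r^2)]
  -- continuity / measurability of integrands
  have hAc : Continuous A := (continuous_pow (d-1)).mul (huc.norm.pow 2)
  have hAint : IntegrableOn A (Set.Ioi (0:ℝ)) :=
    hbound_int _ _ _ measurableSet_Ioi hAc.aestronglyMeasurable hA_bound
  have hBfm : Measurable Bf :=
    (measurable_id.pow_const (d-1)).mul (hωe.mul (hDfe.measurable.pow_const 2))
  have hBfint : IntegrableOn Bf (Set.Ioi (0:ℝ)) :=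
    hbound_int _ _ _ measurableSet_Ioi hBfm.aestronglyMeasurable hBf_bound
  have hψc : Continuous ψ := continuous_const.mul (huc.inner hu'c)
  have havc : Continuous av := (Real.continuous_sqrt.comp (continuous_pow (d-1))).mul huc.norm
  have hbvm : Measurable bv :=
    ((Real.continuous_sqrt.comp (continuous_pow (d-1))).measurable).mul
      ((Real.continuous_sqrt.measurable.comp hωe).mul hDfe.measurable)
  -- pointwise bound for ψ and g₁
  set g₁ : ℝ → ℝ := fun r => 2 * (‖u r‖ * ‖Df (r • e)‖) with hg₁_def
  have hg₁c : Continuous g₁ := continuous_const.mul (huc.norm.mul hDfe)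
  have hu_decay : ∀ r : ℝ, ‖u r‖ ≤ (C0 + C2) * (1 + r^2)⁻¹ := by
    intro r
    have h3 : r^2 * ‖u r‖ ≤ C2 := by
      have h := hC2' (r • e)
      rw [norm_smul, he, mul_one, Real.norm_eq_abs, sq_abs] at h
      exact h
    have h4 : ‖u r‖ ≤ C0 := hC0' _
    rw [← div_eq_mul_inv, le_div_iff₀ (by positivity)]
    have expand : ‖u r‖ * (1+r^2) = ‖u r‖ + r^2*‖u r‖ := by ring
    linarith
  have hg₁_pt : ∀ r : ℝ, g₁ r ≤ (2*(D0*(C0+C2))) * (1 + r^2)⁻¹ := by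
    intro r
    have h2 : ‖Df (r • e)‖ ≤ D0 := hD0' _
    have h5 := hu_decay r
    have hinv : (0:ℝ) ≤ (1+r^2)⁻¹ := by positivity
    calc g₁ r = 2 * (‖u r‖ * ‖Df (r • e)‖) := rfl
      _ ≤ 2 * (((C0 + C2) * (1 + r^2)⁻¹) * D0) := by
          apply mul_le_mul_of_nonneg_left _ zero_le_two
          exact mul_le_mul h5 h2 (norm_nonneg _) (by positivity)
      _ = (2*(D0*(C0+C2))) * (1 + r^2)⁻¹ := by ring
  have hg₁_nonneg : ∀ r : ℝ, 0 ≤ g₁ r := fun r => by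
    simp only [hg₁_def]; positivity
  have hψ_pt : ∀ r : ℝ, |ψ r| ≤ (2*(D0*(C0+C2))) * (1 + r^2)⁻¹ := by
    intro r
    refine le_trans ?_ (hg₁_pt r)
    have h1 : |(inner ℝ (u r) (u' r) : ℝ)| ≤ ‖u r‖ * ‖u' r‖ := abs_real_inner_le_norm _ _
    have h2 : ‖u' r‖ ≤ ‖Df (r • e)‖ := hu'le r
    calc |ψ r| = 2 * |(inner ℝ (u r) (u' r) : ℝ)| := by
          rw [hψ_def]; rw [abs_mul, abs_two]
      _ ≤ 2 * (‖u r‖ * ‖u' r‖) := by linarith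
      _ ≤ 2 * (‖u r‖ * ‖Df (r • e)‖) := by
          apply mul_le_mul_of_nonneg_left _ zero_le_two
          exact mul_le_mul_of_nonneg_left h2 (norm_nonneg _)
  -- the point x
  set R := ‖x‖ with hR_def
  have hR0 : (0:ℝ) ≤ R := norm_nonneg x
  have hψint : IntegrableOn ψ (Set.Ioi R) :=
    hbound_int _ _ _ measurableSet_Ioi hψc.aestronglyMeasurable (fun r _ => hψ_pt r)
  have hg₁int : IntegrableOn g₁ (Set.Ioi R) :=
    hbound_int _ _ _ measurableSet_Ioi hg₁c.aestronglyMeasurable (fun r _ => by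
      rw [abs_of_nonneg (hg₁_nonneg r)]; exact hg₁_pt r)
  have hFTC : ∫ r in Set.Ioi R, ψ r = 0 - φ R :=
    integral_Ioi_of_hasDerivAt_of_tendsto (hφψ R).continuousAt.continuousWithinAt
      (fun r _ => hφψ r) hψint hφ0
  have step1 : φ R ≤ ∫ r in Set.Ioi R, g₁ r := by
    have h1 : φ R = ∫ r in Set.Ioi R, -ψ r := by
      rw [integral_neg, hFTC]; ring
    rw [h1]
    refine integral_mono hψint.neg hg₁int fun r => ?_
    have := hψ_pt r
    calc -ψ r ≤ |ψ r| := neg_le_abs (ψ r)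
      _ ≤ 2 * (‖u r‖ * ‖u' r‖) := by
          have h1 : |(inner ℝ (u r) (u' r) : ℝ)| ≤ ‖u r‖ * ‖u' r‖ := abs_real_inner_le_norm _ _
          calc |ψ r| = 2 * |(inner ℝ (u r) (u' r) : ℝ)| := by rw [hψ_def, abs_mul, abs_two]
            _ ≤ 2 * (‖u r‖ * ‖u' r‖) := by linarith
      _ ≤ g₁ r := by
          apply mul_le_mul_of_nonneg_left _ zero_le_two
          exact mul_le_mul_of_nonneg_left (hu'le r) (norm_nonneg _)
  -- pointwise comparison on Ioi R
  have hab_int : IntegrableOn (fun r => av r * bv r) (Set.Ioi R) := by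
    refine hbound_int (((C0^2 + 2*(Cd*C0)) + B*(D0^2 + 2*(Dd*D0)))/2) _ _ measurableSet_Ioi
      (havc.measurable.mul hbvm).aestronglyMeasurable (fun r hr => ?_)
    have hr0 : (0:ℝ) < r := lt_of_le_of_lt hR0 hr
    have hav2 : av r ^ 2 = A r := by
      simp only [hav_def, hA_def, mul_pow]
      rw [Real.sq_sqrt (by positivity)]
    have hbv2 : bv r ^ 2 = Bf r := by
      simp only [hbv_def, hBf_def, mul_pow]
      rw [Real.sq_sqrt (by positivity), Real.sq_sqrt (hω0 _)]
    have hA_le : A r ≤ (C0^2 + 2*(Cd*C0)) * (1 + r^2)⁻¹ :=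
      (le_abs_self _).trans (hA_bound r hr0)
    have hB_le : Bf r ≤ (B*(D0^2 + 2*(Dd*D0))) * (1 + r^2)⁻¹ :=
      (le_abs_self _).trans (hBf_bound r hr0)
    have hav0 : 0 ≤ av r := by simp only [hav_def]; positivity
    have hbv0 : 0 ≤ bv r := by
      simp only [hbv_def]
      have := Real.sqrt_nonneg (ω (r • e))
      positivity
    have hamgm : av r * bv r ≤ (av r ^2 + bv r ^2)/2 := by nlinarith [sq_nonneg (av r - bv r)]
    rw [abs_of_nonneg (mul_nonneg hav0 hbv0)]
    calc av r * bv r ≤ (av r ^2 + bv r ^2)/2 := hamgm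
      _ = (A r + Bf r)/2 := by rw [hav2, hbv2]
      _ ≤ ((C0^2 + 2*(Cd*C0)) * (1 + r^2)⁻¹ + (B*(D0^2 + 2*(Dd*D0))) * (1 + r^2)⁻¹)/2 := by
          linarith
      _ = (((C0^2 + 2*(Cd*C0)) + B*(D0^2 + 2*(Dd*D0)))/2) * (1 + r^2)⁻¹ := by ring
  -- Cauchy–Schwarz on Ioi R
  have hav0ae : 0 ≤ᵐ[volume.restrict (Set.Ioi R)] av :=
    Filter.Eventually.of_forall fun r => by
      simp only [hav_def]
      have h1 := Real.sqrt_nonneg (r^(d-1))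
      positivity
  have hbv0ae : 0 ≤ᵐ[volume.restrict (Set.Ioi R)] bv :=
    Filter.Eventually.of_forall fun r => by
      simp only [hbv_def]
      have h1 := Real.sqrt_nonneg (r^(d-1))
      have h2 := Real.sqrt_nonneg (ω (r • e))
      positivity
  have heqA : ∀ᵐ r ∂(volume.restrict (Set.Ioi R)), A r = av r ^ 2 := by
    refine (ae_restrict_iff' measurableSet_Ioi).2 (Filter.Eventually.of_forall fun r hr => ?_)
    have hr0 : (0:ℝ) < r := lt_of_le_of_lt hR0 hr
    simp only [hav_def, hA_def, mul_pow]
    rw [Real.sq_sqrt (by positivity)]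
  have heqB : ∀ᵐ r ∂(volume.restrict (Set.Ioi R)), Bf r = bv r ^ 2 := by
    refine (ae_restrict_iff' measurableSet_Ioi).2 (Filter.Eventually.of_forall fun r hr => ?_)
    have hr0 : (0:ℝ) < r := lt_of_le_of_lt hR0 hr
    simp only [hbv_def, hBf_def, mul_pow]
    rw [Real.sq_sqrt (by positivity), Real.sq_sqrt (hω0 _)]
  have hAintR : IntegrableOn A (Set.Ioi R) := hAint.mono_set (Set.Ioi_subset_Ioi hR0)
  have hBintR : IntegrableOn Bf (Set.Ioi R) := hBfint.mono_set (Set.Ioi_subset_Ioi hR0)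
  have hav2int : Integrable (fun r => av r ^ 2) (volume.restrict (Set.Ioi R)) :=
    hAintR.congr heqA
  have hbv2int : Integrable (fun r => bv r ^ 2) (volume.restrict (Set.Ioi R)) :=
    hBintR.congr heqB
  have hCS := integral_cauchy_schwarz' hav0ae hbv0ae havc.aestronglyMeasurable
      hbvm.aestronglyMeasurable hav2int hbv2int
  have hA0ae : 0 ≤ᵐ[volume.restrict (Set.Ioi (0:ℝ))] A :=
    (ae_restrict_iff' measurableSet_Ioi).2 (Filter.Eventually.of_forall fun r hr =>
      mul_nonneg (pow_nonneg (le_of_lt hr) _) (sq_nonneg _))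
  have hB0ae : 0 ≤ᵐ[volume.restrict (Set.Ioi (0:ℝ))] Bf :=
    (ae_restrict_iff' measurableSet_Ioi).2 (Filter.Eventually.of_forall fun r hr =>
      mul_nonneg (pow_nonneg (le_of_lt hr) _) (mul_nonneg (hω0 _) (sq_nonneg _)))
  have hIA : ∫ r in Set.Ioi R, av r ^ 2 ≤ ∫ r in Set.Ioi (0:ℝ), A r := by
    rw [← integral_congr_ae heqA]
    exact setIntegral_mono_set hAint hA0ae
      (HasSubset.Subset.eventuallyLE (Set.Ioi_subset_Ioi hR0))
  have hIB : ∫ r in Set.Ioi R, bv r ^ 2 ≤ ∫ r in Set.Ioi (0:ℝ), Bf r := by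
    rw [← integral_congr_ae heqB]
    exact setIntegral_mono_set hBfint hB0ae
      (HasSubset.Subset.eventuallyLE (Set.Ioi_subset_Ioi hR0))
  -- polar identities
  have hSf : ∫ y, ‖f y‖^2 = (d:ℝ)*V*∫ r in Set.Ioi (0:ℝ), A r := by
    simp only [hA_def]
    refine polar (fun r => ‖u r‖^2) _ (fun y => ?_)
    have h1 : f y = u ‖y‖ := hfrad y (‖y‖ • e) ((hnorm_smul ‖y‖ (norm_nonneg y)).symm)
    simp only [hu_def] at h1 ⊢
    rw [h1]
  have hSg : ∫ y, ω y * ‖Df y‖^2 = (d:ℝ)*V*∫ r in Set.Ioi (0:ℝ), Bf r := by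
    simp only [hBf_def]
    refine polar (fun r => ω (r • e) * ‖Df (r • e)‖^2) _ (fun y => ?_)
    have h1 : ω y = ω (‖y‖ • e) := hωrad y (‖y‖ • e) ((hnorm_smul ‖y‖ (norm_nonneg y)).symm)
    have h2 : ‖Df y‖ = ‖Df (‖y‖ • e)‖ :=
      radial_fderiv_norm_eq f.differentiable hfrad ((hnorm_smul ‖y‖ (norm_nonneg y)).symm)
    rw [h1, h2]
  -- pointwise chain
  have hfxu : ‖f x‖^2 = φ R := by
    have h1 : f x = u R := hfrad x (R • e) ((hnorm_smul R hR0).symm)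
    simp only [hφ_def]
    rw [h1]
  have hpt : ∀ r ∈ Set.Ioi R, (R^(d-1) * Real.sqrt (ω x)) * g₁ r
      ≤ (2*Real.sqrt C') * (av r * bv r) := by
    intro r hr
    have hrR : R < r := hr
    have hr0 : (0:ℝ) < r := lt_of_le_of_lt hR0 hrR
    have e1 : R^(d-1) ≤ r^(d-1) := pow_le_pow_left₀ hR0 hrR.le _
    have e2 : Real.sqrt (ω x) ≤ Real.sqrt C' * Real.sqrt (ω (r • e)) := by
      rw [← Real.sqrt_mul hC'.le]
      apply Real.sqrt_le_sqrt
      have := hωmono x (r • e) (by rw [hnorm_smul r hr0.le]; exact hrR.le)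
      exact this
    have hrs : Real.sqrt (r^(d-1)) * Real.sqrt (r^(d-1)) = r^(d-1) :=
      Real.mul_self_sqrt (by positivity)
    calc (R^(d-1) * Real.sqrt (ω x)) * g₁ r
        ≤ (r^(d-1) * (Real.sqrt C' * Real.sqrt (ω (r • e)))) * g₁ r := by
          apply mul_le_mul_of_nonneg_right _ (hg₁_nonneg r)
          apply mul_le_mul e1 e2 (Real.sqrt_nonneg _) (by positivity)
      _ = (2*Real.sqrt C') * (av r * bv r) := by
          have hprod : av r * bv r
              = (Real.sqrt (r^(d-1)) * Real.sqrt (r^(d-1)))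
                * (‖u r‖ * (Real.sqrt (ω (r • e)) * ‖Df (r • e)‖)) := by
            simp only [hav_def, hbv_def]; ring
          rw [hprod, hrs]
          simp only [hg₁_def]; ring
  have hP0 : (0:ℝ) ≤ R^(d-1) * Real.sqrt (ω x) := by positivity
  have main : R^(d-1) * Real.sqrt (ω x) * ‖f x‖^2
      ≤ (2*Real.sqrt C') * (Real.sqrt (∫ r in Set.Ioi (0:ℝ), A r)
          * Real.sqrt (∫ r in Set.Ioi (0:ℝ), Bf r)) := by
    calc R^(d-1) * Real.sqrt (ω x) * ‖f x‖^2 = (R^(d-1) * Real.sqrt (ω x)) * φ R := by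
          rw [hfxu]
      _ ≤ (R^(d-1) * Real.sqrt (ω x)) * ∫ r in Set.Ioi R, g₁ r :=
          mul_le_mul_of_nonneg_left step1 hP0
      _ = ∫ r in Set.Ioi R, (R^(d-1) * Real.sqrt (ω x)) * g₁ r := (integral_const_mul _ _).symm
      _ ≤ ∫ r in Set.Ioi R, (2*Real.sqrt C') * (av r * bv r) :=
          setIntegral_mono_on (hg₁int.const_mul _) (hab_int.const_mul _) measurableSet_Ioi hpt
      _ = (2*Real.sqrt C') * ∫ r in Set.Ioi R, av r * bv r := integral_const_mul _ _
      _ ≤ (2*Real.sqrt C') * (Real.sqrt (∫ r in Set.Ioi R, av r ^ 2)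
            * Real.sqrt (∫ r in Set.Ioi R, bv r ^ 2)) := by
          apply mul_le_mul_of_nonneg_left hCS (by positivity)
      _ ≤ (2*Real.sqrt C') * (Real.sqrt (∫ r in Set.Ioi (0:ℝ), A r)
            * Real.sqrt (∫ r in Set.Ioi (0:ℝ), Bf r)) := by
          apply mul_le_mul_of_nonneg_left _ (by positivity)
          exact mul_le_mul (Real.sqrt_le_sqrt hIA) (Real.sqrt_le_sqrt hIB)
            (Real.sqrt_nonneg _) (Real.sqrt_nonneg _)
  -- final constant juggling
  have hSfnn : 0 ≤ ∫ y, ‖f y‖^2 := integral_nonneg fun y => sq_nonneg _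
  have hSgnn : 0 ≤ ∫ y, ω y * ‖Df y‖^2 :=
    integral_nonneg fun y => mul_nonneg (hω0 y) (sq_nonneg _)
  have hIA' : ∫ r in Set.Ioi (0:ℝ), A r = (∫ y, ‖f y‖^2) / ((d:ℝ)*V) := by
    rw [hSf]; field_simp
  have hIB' : ∫ r in Set.Ioi (0:ℝ), Bf r = (∫ y, ω y * ‖Df y‖^2) / ((d:ℝ)*V) := by
    rw [hSg]; field_simp
  have hsC' : Real.sqrt C' ≤ C' := by
    nlinarith [Real.sq_sqrt hC'.le, Real.sqrt_nonneg C']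
  have hW : Real.sqrt ((d:ℝ)*V) * Real.sqrt ((d:ℝ)*V) = (d:ℝ)*V := Real.mul_self_sqrt hdV.le
  refine le_trans main ?_
  rw [hIA', hIB', Real.sqrt_div hSfnn, Real.sqrt_div hSgnn]
  calc 2*Real.sqrt C' * (Real.sqrt (∫ y, ‖f y‖^2) / Real.sqrt ((d:ℝ)*V)
        * (Real.sqrt (∫ y, ω y * ‖Df y‖^2) / Real.sqrt ((d:ℝ)*V)))
      = 2/((d:ℝ)*V) * Real.sqrt C' * Real.sqrt (∫ y, ‖f y‖^2)
          * Real.sqrt (∫ y, ω y * ‖Df y‖^2) := by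
        rw [div_mul_div_comm, hW]; ring
    _ ≤ 2/((d:ℝ)*V) * C' * Real.sqrt (∫ y, ‖f y‖^2)
          * Real.sqrt (∫ y, ω y * ‖Df y‖^2) := by
        have h2 : (0:ℝ) ≤ 2/((d:ℝ)*V) := by positivity
        apply mul_le_mul_of_nonneg_right (mul_le_mul_of_nonneg_right
          (mul_le_mul_of_nonneg_left hsC' h2) (Real.sqrt_nonneg _)) (Real.sqrt_nonneg _)
end

section
/- Let d ≥ 3 and u₀ ∈ Ḣ¹(ℝ^d) with E(u₀) ≤ (1−δ₀)E(W) for some δ₀ > 0 and ‖∇u₀‖_2 ≥ ‖∇W‖_2. Then there exists δ₂ > 0 depending only on δ₀ and d such that: (1) ‖∇u₀‖_2² ≥ (1+δ₂)‖∇W‖_2²; and (2) ∫_{ℝ^d}(|∇u₀|² − |u₀|^{2d/(d-2)}) dx ≤ −2δ₂/((d-2)C_d^d). -/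
open MeasureTheory Real Set

lemma energyTrap_wderiv (d : ℕ) (hd : 3 ≤ d) (x : EuclideanSpace ℝ (Fin d)) :
    HasFDerivAt (fun x : EuclideanSpace ℝ (Fin d) =>
        (1 + ‖x‖ ^ 2 / (d * (d - 2 : ℝ))) ^ (-((d : ℝ) - 2) / 2))
      ((-((d:ℝ)-2)/2 * (1 + ‖x‖ ^ 2 / (d * (d - 2 : ℝ))) ^ (-((d:ℝ)-2)/2 - 1)
          * (1 / (d * (d - 2 : ℝ)))) • (2 • (innerSL ℝ x))) x := by
  have hd2 : (2:ℝ) < d := by exact_mod_cast by omega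
  have hc : (0:ℝ) < d * ((d:ℝ) - 2) := mul_pos (by linarith) (by linarith)
  have hu : (0:ℝ) < 1 + ‖x‖ ^ 2 / (d * (d - 2 : ℝ)) := by
    have : 0 ≤ ‖x‖ ^ 2 / (d * (d - 2 : ℝ)) := div_nonneg (by positivity) hc.le
    linarith
  have h1 : HasFDerivAt (fun x : EuclideanSpace ℝ (Fin d) => ‖x‖ ^ 2)
      (2 • (innerSL ℝ x)) x := (hasStrictFDerivAt_norm_sq x).hasFDerivAt
  have h2 : HasDerivAt (fun s : ℝ => (1 + s / (d * (d - 2 : ℝ))) ^ (-((d:ℝ)-2)/2))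
      (-((d:ℝ)-2)/2 * (1 + ‖x‖ ^ 2 / (d * (d - 2 : ℝ))) ^ (-((d:ℝ)-2)/2 - 1)
        * (1 / (d * (d - 2 : ℝ)))) (‖x‖ ^ 2) := by
    have hb : HasDerivAt (fun s : ℝ => 1 + s / (d * (d - 2 : ℝ)))
        (1 / (d * (d - 2 : ℝ))) (‖x‖ ^ 2) := by
      simpa [one_div] using ((hasDerivAt_id (‖x‖^2)).div_const (d * ((d:ℝ) - 2))).const_add 1
    have hr := (Real.hasDerivAt_rpow_const (x := 1 + ‖x‖ ^ 2 / (d * (d - 2 : ℝ)))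
      (p := -((d:ℝ)-2)/2) (Or.inl hu.ne'))
    simpa [Function.comp_def, mul_comm, mul_assoc, mul_left_comm] using hr.comp (‖x‖^2) hb
  exact h2.comp_hasFDerivAt x h1


lemma energyTrap_wnorm (d : ℕ) (hd : 3 ≤ d) (x : EuclideanSpace ℝ (Fin d)) :
    ‖fderiv ℝ (fun x : EuclideanSpace ℝ (Fin d) =>
        (1 + ‖x‖ ^ 2 / (d * (d - 2 : ℝ))) ^ (-((d : ℝ) - 2) / 2)) x‖ ^ 2
      = ‖x‖ ^ 2 / (d:ℝ)^2 * (1 + ‖x‖ ^ 2 / (d * (d - 2 : ℝ))) ^ (-(d:ℝ)) := by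
  have hd2 : (2:ℝ) < d := by exact_mod_cast by omega
  have hc : (0:ℝ) < d * ((d:ℝ) - 2) := mul_pos (by linarith) (by linarith)
  have hu : (0:ℝ) < 1 + ‖x‖ ^ 2 / (d * (d - 2 : ℝ)) := by
    have : 0 ≤ ‖x‖ ^ 2 / (d * (d - 2 : ℝ)) := div_nonneg (by positivity) hc.le
    linarith
  set u : ℝ := 1 + ‖x‖ ^ 2 / (d * (d - 2 : ℝ)) with hu_def
  rw [(energyTrap_wderiv d hd x).fderiv]
  have h2 : (2:ℕ) • (innerSL ℝ x) = (2:ℝ) • (innerSL ℝ x) := by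
    simp [two_smul]
  rw [h2, smul_smul, norm_smul, innerSL_apply_norm]
  have hup : (0:ℝ) < u ^ (-((d:ℝ)-2)/2 - 1) := Real.rpow_pos_of_pos hu _
  have habs : |(-((d:ℝ)-2)/2 * u ^ (-((d:ℝ)-2)/2 - 1) * (1 / (d * (d - 2 : ℝ)))) * 2|
      = u ^ (-((d:ℝ)-2)/2 - 1) / d := by
    have heq : (-((d:ℝ)-2)/2 * u ^ (-((d:ℝ)-2)/2 - 1) * (1 / (d * (d - 2 : ℝ)))) * 2
        = -((((d:ℝ)-2)/2 * u ^ (-((d:ℝ)-2)/2 - 1) * (1 / (d * (d - 2 : ℝ)))) * 2) := by ring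
    have hnn : 0 ≤ (((d:ℝ)-2)/2 * u ^ (-((d:ℝ)-2)/2 - 1) * (1 / (d * (d - 2 : ℝ)))) * 2 :=
      mul_nonneg (mul_nonneg (mul_nonneg (div_nonneg (by linarith) (by norm_num)) hup.le)
        (le_of_lt (one_div_pos.mpr hc))) (by norm_num)
    rw [heq, abs_neg, abs_of_nonneg hnn]
    field_simp
    ring_nf
    have hd2' : (-2 + (d:ℝ)) ≠ 0 := by linarith
    field_simp
    ring
  rw [Real.norm_eq_abs, habs]
  have : (u ^ (-((d:ℝ)-2)/2 - 1)) ^ 2 = u ^ (-(d:ℝ)) := by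
    rw [sq, ← Real.rpow_add hu]
    norm_num
    ring_nf
    rw [Real.rpow_neg hu.le, Real.rpow_natCast, inv_pow]
  rw [mul_pow, div_pow, this]
  ring


lemma energyTrap_oneDint (d k : ℕ) (hd : 3 ≤ d) (hk : k ≤ d + 1) (c : ℝ) (hc : 0 < c) :
    IntegrableOn (fun r : ℝ => r ^ k * (1 + r ^ 2 / c) ^ (-(d:ℝ))) (Ioi 0) := by
  have hvpos : ∀ r : ℝ, 0 < 1 + r ^ 2 / c := fun r => by
    have : 0 ≤ r ^ 2 / c := div_nonneg (by positivity) hc.le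
    linarith
  have hcont : Continuous (fun r : ℝ => r ^ k * (1 + r ^ 2 / c) ^ (-(d:ℝ))) := by
    apply Continuous.mul (continuous_pow k)
    apply Continuous.rpow_const (by continuity)
    intro r; exact Or.inl (hvpos r).ne'
  rw [← Ioc_union_Ioi_eq_Ioi (zero_le_one : (0:ℝ) ≤ 1), integrableOn_union]
  constructor
  · exact hcont.integrableOn_Ioc
  · have hexp : (k:ℝ) - 2 * d < -1 := by
      have : (k:ℝ) ≤ d + 1 := by exact_mod_cast hk
      have : (3:ℝ) ≤ d := by exact_mod_cast hd
      linarith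
    have hint : IntegrableOn (fun r : ℝ => c ^ (d:ℝ) * r ^ ((k:ℝ) - 2 * d)) (Ioi 1) :=
      (integrableOn_Ioi_rpow_of_lt hexp zero_lt_one).const_mul _
    apply Integrable.mono' hint hcont.aestronglyMeasurable.restrict
    filter_upwards [ae_restrict_mem measurableSet_Ioi] with r hr
    have hr1 : (1:ℝ) < r := hr
    have hr0 : (0:ℝ) < r := by linarith
    have hb : r ^ 2 / c ≤ 1 + r ^ 2 / c := by linarith
    have hb0 : (0:ℝ) < r ^ 2 / c := div_pos (by positivity) hc
    have h1 : (1 + r ^ 2 / c) ^ (-(d:ℝ)) ≤ (r ^ 2 / c) ^ (-(d:ℝ)) :=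
      Real.rpow_le_rpow_of_nonpos hb0 hb (neg_nonpos.mpr (Nat.cast_nonneg d))
    have h2 : (r ^ 2 / c) ^ (-(d:ℝ)) = c ^ (d:ℝ) * r ^ (-(2*(d:ℝ))) := by
      rw [Real.div_rpow (by positivity) hc.le, Real.rpow_neg hc.le,
        div_eq_mul_inv, inv_inv, mul_comm]
      congr 1
      rw [← Real.rpow_natCast r 2, ← Real.rpow_mul hr0.le]
      congr 1
      push_cast
      ring
    have h3 : r ^ k = r ^ (k:ℝ) := (Real.rpow_natCast r k).symm
    have hnn : 0 ≤ r ^ k * (1 + r ^ 2 / c) ^ (-(d:ℝ)) :=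
      mul_nonneg (by positivity) (Real.rpow_pos_of_pos (hvpos r) _).le
    rw [Real.norm_eq_abs, abs_of_nonneg hnn]
    calc r ^ k * (1 + r ^ 2 / c) ^ (-(d:ℝ))
        ≤ r ^ k * (c ^ (d:ℝ) * r ^ (-(2*(d:ℝ)))) := by
          rw [← h2]; exact mul_le_mul_of_nonneg_left h1 (by positivity)
      _ = c ^ (d:ℝ) * (r ^ (k:ℝ) * r ^ (-(2*(d:ℝ)))) := by rw [h3]; ring
      _ = c ^ (d:ℝ) * r ^ ((k:ℝ) - 2 * d) := by
          rw [← Real.rpow_add hr0]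
          ring_nf


lemma energyTrap_oneDeq (d : ℕ) (hd : 3 ≤ d) :
    ∫ r in Ioi (0:ℝ), r ^ (d+1) * (1 + r ^ 2 / ((d:ℝ)*((d:ℝ)-2))) ^ (-(d:ℝ))
      = (d:ℝ)^2 * ∫ r in Ioi (0:ℝ), r ^ (d-1) * (1 + r ^ 2 / ((d:ℝ)*((d:ℝ)-2))) ^ (-(d:ℝ)) := by
  have hd2 : (2:ℝ) < d := by exact_mod_cast by omega
  set c : ℝ := (d:ℝ) * ((d:ℝ) - 2) with hc_def
  have hc : 0 < c := mul_pos (by linarith) (by linarith)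
  have hvpos : ∀ r : ℝ, 0 < 1 + r ^ 2 / c := fun r => by
    have : 0 ≤ r ^ 2 / c := div_nonneg (by positivity) hc.le
    linarith
  set F : ℝ → ℝ := fun r => r ^ d * (1 + r ^ 2 / c) ^ (1 - (d:ℝ)) with hF_def
  set G : ℝ → ℝ := fun r =>
    (d:ℝ) * (r ^ (d-1) * (1 + r ^ 2 / c) ^ (-(d:ℝ)))
      - (1/(d:ℝ)) * (r ^ (d+1) * (1 + r ^ 2 / c) ^ (-(d:ℝ))) with hG_def
  have hderiv : ∀ r : ℝ, HasDerivAt F (G r) r := by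
    intro r
    have hv : HasDerivAt (fun r : ℝ => 1 + r ^ 2 / c) (2 * r / c) r := by
      simpa using ((hasDerivAt_pow 2 r).div_const c).const_add 1
    have hrpow := (Real.hasDerivAt_rpow_const (x := 1 + r ^ 2 / c)
      (p := 1 - (d:ℝ)) (Or.inl (hvpos r).ne'))
    have hcomp := hrpow.comp r hv
    have hmul := (hasDerivAt_pow d r).mul hcomp
    convert hmul using 1 <;> try rfl
    have hexp : (1 - (d:ℝ)) - 1 = -(d:ℝ) := by ring
    have h13 : (1 + r ^ 2 / c) ^ (1 - (d:ℝ))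
        = (1 + r ^ 2 / c) * (1 + r ^ 2 / c) ^ (-(d:ℝ)) := by
      rw [show (1:ℝ) - (d:ℝ) = 1 + (-(d:ℝ)) by ring, Real.rpow_add (hvpos r),
        Real.rpow_one]
    have hp1 : r ^ (d-1) * r ^ 2 = r ^ (d+1) := by
      rw [← pow_add]; congr 1; omega
    have hp2 : r ^ d * r = r ^ (d+1) := by rw [← pow_succ]
    have hp3 : r ^ d = r ^ (d-1) * r := by rw [← pow_succ]; congr 1; omega
    simp only [Function.comp, hexp, h13, hG_def]
    rw [hp3, ← hp1, hc_def]
    have : (d:ℝ) - 2 ≠ 0 := by linarith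
    have : (d:ℝ) ≠ 0 := by linarith
    field_simp
    ring
  have htend : Filter.Tendsto F Filter.atTop (nhds 0) := by
    have hbound : ∀ r : ℝ, 1 ≤ r → F r ≤ c ^ ((d:ℝ) - 1) * r ^ ((2:ℝ) - d) := by
      intro r hr
      have hr0 : (0:ℝ) < r := by linarith
      have hb0 : (0:ℝ) < r ^ 2 / c := div_pos (by positivity) hc
      have h1 : (1 + r ^ 2 / c) ^ (1 - (d:ℝ)) ≤ (r ^ 2 / c) ^ (1 - (d:ℝ)) :=
        Real.rpow_le_rpow_of_nonpos hb0 (by linarith) (by linarith)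
      have h2 : (r ^ 2 / c) ^ (1 - (d:ℝ)) = c ^ ((d:ℝ) - 1) * (r ^ 2) ^ ((1:ℝ) - d) := by
        rw [Real.div_rpow (by positivity) hc.le, div_eq_mul_inv,
          ← Real.rpow_neg hc.le, mul_comm]
        congr 1
        ring_nf
      have h3 : r ^ d * (r ^ 2) ^ ((1:ℝ) - d) = r ^ ((2:ℝ) - d) := by
        rw [← Real.rpow_natCast r d, ← Real.rpow_natCast r 2,
          ← Real.rpow_mul hr0.le, ← Real.rpow_add hr0]
        congr 1
        push_cast
        ring
      calc F r ≤ r ^ d * ((r ^ 2 / c) ^ (1 - (d:ℝ))) :=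
            mul_le_mul_of_nonneg_left h1 (by positivity)
        _ = c ^ ((d:ℝ) - 1) * (r ^ d * (r ^ 2) ^ ((1:ℝ) - d)) := by rw [h2]; ring
        _ = c ^ ((d:ℝ) - 1) * r ^ ((2:ℝ) - d) := by rw [h3]
    have hg : Filter.Tendsto (fun r : ℝ => c ^ ((d:ℝ) - 1) * r ^ ((2:ℝ) - d))
        Filter.atTop (nhds 0) := by
      have := (tendsto_rpow_neg_atTop (y := (d:ℝ) - 2) (by linarith)).const_mul
        (c ^ ((d:ℝ) - 1))
      simpa [mul_zero, show -((d:ℝ) - 2) = (2:ℝ) - d by ring] using this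
    apply squeeze_zero' ?_ ?_ hg
    · filter_upwards [Filter.eventually_ge_atTop (1:ℝ)] with r hr
      exact mul_nonneg (by positivity) (Real.rpow_pos_of_pos (hvpos r) _).le
    · filter_upwards [Filter.eventually_ge_atTop (1:ℝ)] with r hr
      exact hbound r hr
  have hint1 : IntegrableOn (fun r : ℝ => r ^ (d-1) * (1 + r ^ 2 / c) ^ (-(d:ℝ)))
      (Ioi 0) := energyTrap_oneDint d (d-1) hd (by omega) c hc
  have hint2 : IntegrableOn (fun r : ℝ => r ^ (d+1) * (1 + r ^ 2 / c) ^ (-(d:ℝ)))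
      (Ioi 0) := energyTrap_oneDint d (d+1) hd (by omega) c hc
  have hGint : IntegrableOn G (Ioi 0) := by
    exact (hint1.const_mul _).sub (hint2.const_mul _)
  have hFTC : ∫ r in Ioi (0:ℝ), G r = 0 - F 0 :=
    integral_Ioi_of_hasDerivAt_of_tendsto' (fun x _ => hderiv x) hGint htend
  have hF0 : F 0 = 0 := by
    simp [hF_def, zero_pow (by omega : d ≠ 0)]
  have hsplit : ∫ r in Ioi (0:ℝ), G r
      = (d:ℝ) * (∫ r in Ioi (0:ℝ), r ^ (d-1) * (1 + r ^ 2 / c) ^ (-(d:ℝ)))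
        - (1/(d:ℝ)) * (∫ r in Ioi (0:ℝ), r ^ (d+1) * (1 + r ^ 2 / c) ^ (-(d:ℝ))) := by
    rw [hG_def]
    rw [integral_sub (hint1.const_mul _) (hint2.const_mul _),
      integral_const_mul, integral_const_mul]
  have hzero : (d:ℝ) * (∫ r in Ioi (0:ℝ), r ^ (d-1) * (1 + r ^ 2 / c) ^ (-(d:ℝ)))
      - (1/(d:ℝ)) * (∫ r in Ioi (0:ℝ), r ^ (d+1) * (1 + r ^ 2 / c) ^ (-(d:ℝ))) = 0 := by
    rw [← hsplit, hFTC, hF0]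
    ring
  have key : ∀ a b : ℝ, (d:ℝ) * a - (1/(d:ℝ)) * b = 0 → b = (d:ℝ)^2 * a := by
    intro a b h
    have hd0 : (d:ℝ) ≠ 0 := by positivity
    field_simp at h
    linear_combination -h
  exact key _ _ hzero


lemma energyTrap_ddim_eq (d : ℕ) (hd : 3 ≤ d) :
    (∫ x : EuclideanSpace ℝ (Fin d),
        ((1 + ‖x‖ ^ 2 / (d * (d - 2 : ℝ))) ^ (-((d : ℝ) - 2) / 2))
          ^ ((2 * (d : ℝ)) / ((d : ℝ) - 2)))
      = ∫ x : EuclideanSpace ℝ (Fin d),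
          ‖fderiv ℝ (fun x : EuclideanSpace ℝ (Fin d) =>
            (1 + ‖x‖ ^ 2 / (d * (d - 2 : ℝ))) ^ (-((d : ℝ) - 2) / 2)) x‖ ^ 2 := by
  have hd2 : (2:ℝ) < d := by exact_mod_cast by omega
  have hc : (0:ℝ) < (d:ℝ) * ((d:ℝ) - 2) := mul_pos (by linarith) (by linarith)
  have hvpos : ∀ r : ℝ, 0 < 1 + r ^ 2 / ((d:ℝ)*((d:ℝ)-2)) := fun r => by
    have : 0 ≤ r ^ 2 / ((d:ℝ)*((d:ℝ)-2)) := div_nonneg (by positivity) hc.le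
    linarith
  haveI : Nonempty (Fin d) := ⟨⟨0, by omega⟩⟩
  haveI : Nontrivial (EuclideanSpace ℝ (Fin d)) := inferInstance
  set f₂ : ℝ → ℝ := fun r => (1 + r ^ 2 / ((d:ℝ)*((d:ℝ)-2))) ^ (-(d:ℝ)) with hf₂
  set f₁ : ℝ → ℝ := fun r => r ^ 2 / (d:ℝ)^2 * (1 + r ^ 2 / ((d:ℝ)*((d:ℝ)-2))) ^ (-(d:ℝ))
    with hf₁
  have e2 : (∫ x : EuclideanSpace ℝ (Fin d),
      ((1 + ‖x‖ ^ 2 / (d * (d - 2 : ℝ))) ^ (-((d : ℝ) - 2) / 2))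
        ^ ((2 * (d : ℝ)) / ((d : ℝ) - 2))) = ∫ x : EuclideanSpace ℝ (Fin d), f₂ ‖x‖ := by
    congr 1; funext x
    show ((1 + ‖x‖ ^ 2 / (d * (d - 2 : ℝ))) ^ (-((d : ℝ) - 2) / 2))
        ^ ((2 * (d : ℝ)) / ((d : ℝ) - 2)) = (1 + ‖x‖ ^ 2 / ((d:ℝ)*((d:ℝ)-2))) ^ (-(d:ℝ))
    rw [← Real.rpow_mul (hvpos ‖x‖).le]
    congr 1
    have h2d : (d:ℝ) - 2 ≠ 0 := by linarith
    field_simp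
  have e1 : (∫ x : EuclideanSpace ℝ (Fin d),
      ‖fderiv ℝ (fun x : EuclideanSpace ℝ (Fin d) =>
        (1 + ‖x‖ ^ 2 / (d * (d - 2 : ℝ))) ^ (-((d : ℝ) - 2) / 2)) x‖ ^ 2)
      = ∫ x : EuclideanSpace ℝ (Fin d), f₁ ‖x‖ := by
    congr 1; funext x
    exact energyTrap_wnorm d hd x
  rw [e1, e2, integral_fun_norm_addHaar volume f₁, integral_fun_norm_addHaar volume f₂]
  simp only [finrank_euclideanSpace_fin]
  congr 1
  congr 1
  have h1 : ∫ y in Ioi (0:ℝ), y ^ (d-1) • f₁ y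
      = ∫ y in Ioi (0:ℝ), (1/(d:ℝ)^2) * (y ^ (d+1) * (1 + y ^ 2 / ((d:ℝ)*((d:ℝ)-2))) ^ (-(d:ℝ))) := by
    congr 1; funext y
    have hp : y ^ (d-1) * y ^ 2 = y ^ (d+1) := by rw [← pow_add]; congr 1; omega
    rw [hf₁, smul_eq_mul, ← hp]
    ring
  have h2 : ∫ y in Ioi (0:ℝ), y ^ (d-1) • f₂ y
      = ∫ y in Ioi (0:ℝ), y ^ (d-1) * (1 + y ^ 2 / ((d:ℝ)*((d:ℝ)-2))) ^ (-(d:ℝ)) := by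
    congr 1
  rw [h1, h2, integral_const_mul, energyTrap_oneDeq d hd]
  have hd0 : ((d:ℝ))^2 ≠ 0 := by positivity
  field_simp


set_option maxHeartbeats 2000000 in
/-- Energy trapping, case `‖∇u₀‖₂ ≥ ‖∇W‖₂`: if `E(u₀) ≤ (1−δ₀)E(W)` then
`‖∇u₀‖₂² ≥ (1+δ₂)‖∇W‖₂²` and `∫(|∇u₀|² − |u₀|^{2d/(d-2)}) ≤ −2δ₂/((d-2)C_d^d)`
for some `δ₂ = δ₂(δ₀,d) > 0`, where `C_d` is the sharp Sobolev constant with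
`‖∇W‖₂² = C_d^{-d}`. -/
theorem energy_trapping_above (d : ℕ) (hd : 3 ≤ d) (δ₀ : ℝ) (hδ₀ : 0 < δ₀)
    (Cd : ℝ) (hCd : 0 < Cd)
    (W : EuclideanSpace ℝ (Fin d) → ℝ)
    (hW : ∀ x, W x = (1 + ‖x‖ ^ 2 / (d * (d - 2 : ℝ))) ^ (-((d : ℝ) - 2) / 2))
    (hCdW : (∫ x, ‖fderiv ℝ W x‖ ^ 2) = Cd ^ (-(d : ℝ)))
    (hsob : ∀ f : EuclideanSpace ℝ (Fin d) → ℂ, Differentiable ℝ f →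
      Integrable (fun x => ‖fderiv ℝ f x‖ ^ 2) →
      Integrable (fun x => ‖f x‖ ^ ((2 * (d : ℝ)) / ((d : ℝ) - 2))) →
      (∫ x, ‖f x‖ ^ ((2 * (d : ℝ)) / ((d : ℝ) - 2))) ^ (((d : ℝ) - 2) / (2 * (d : ℝ)))
        ≤ Cd * Real.sqrt (∫ x, ‖fderiv ℝ f x‖ ^ 2)) :
    ∃ δ₂ : ℝ, 0 < δ₂ ∧
      ∀ u₀ : EuclideanSpace ℝ (Fin d) → ℂ, Differentiable ℝ u₀ →
        Integrable (fun x => ‖fderiv ℝ u₀ x‖ ^ 2) →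
        Integrable (fun x => ‖u₀ x‖ ^ ((2 * (d : ℝ)) / ((d : ℝ) - 2))) →
        (1 / 2) * (∫ x, ‖fderiv ℝ u₀ x‖ ^ 2)
            - (((d : ℝ) - 2) / (2 * (d : ℝ)))
                * (∫ x, ‖u₀ x‖ ^ ((2 * (d : ℝ)) / ((d : ℝ) - 2)))
          ≤ (1 - δ₀) * ((1 / 2) * (∫ x, ‖fderiv ℝ W x‖ ^ 2)
            - (((d : ℝ) - 2) / (2 * (d : ℝ)))
                * (∫ x, W x ^ ((2 * (d : ℝ)) / ((d : ℝ) - 2)))) →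
        (∫ x, ‖fderiv ℝ W x‖ ^ 2) ≤ (∫ x, ‖fderiv ℝ u₀ x‖ ^ 2) →
        ((1 + δ₂) * (∫ x, ‖fderiv ℝ W x‖ ^ 2) ≤ ∫ x, ‖fderiv ℝ u₀ x‖ ^ 2) ∧
        ((∫ x, ‖fderiv ℝ u₀ x‖ ^ 2)
            - (∫ x, ‖u₀ x‖ ^ ((2 * (d : ℝ)) / ((d : ℝ) - 2)))
          ≤ -(2 * δ₂) / (((d : ℝ) - 2) * Cd ^ (d : ℝ))) := by
  have hd2 : (2:ℝ) < d := by exact_mod_cast by omega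
  have hd3 : (3:ℝ) ≤ d := by exact_mod_cast hd
  have hd0 : (0:ℝ) < d := by linarith
  -- the L^{2d/(d-2)} integral of W equals the gradient integral
  have hWf : W = fun x : EuclideanSpace ℝ (Fin d) =>
      (1 + ‖x‖ ^ 2 / (d * (d - 2 : ℝ))) ^ (-((d : ℝ) - 2) / 2) := funext hW
  have hB : (∫ x, W x ^ ((2 * (d : ℝ)) / ((d : ℝ) - 2))) = Cd ^ (-(d : ℝ)) := by
    rw [← hCdW, hWf]
    exact energyTrap_ddim_eq d hd
  set δ₂ : ℝ := min (δ₀/(2*(d:ℝ))) (1/(6*(d:ℝ))) with hδ₂_def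
  have hδ₂0 : 0 < δ₂ := lt_min (div_pos hδ₀ (by linarith)) (div_pos one_pos (by linarith))
  have hδ₂a : δ₂ ≤ δ₀/(2*(d:ℝ)) := min_le_left _ _
  have hδ₂b : δ₂ ≤ 1/(6*(d:ℝ)) := min_le_right _ _
  have hδ₂1 : δ₂ ≤ 1 := hδ₂b.trans (by rw [div_le_one (by linarith)]; linarith)
  have hδ₂δ₀ : δ₂ ≤ δ₀ := hδ₂a.trans (by
    rw [div_le_iff₀ (by linarith)]
    nlinarith)
  refine ⟨δ₂, hδ₂0, ?_⟩
  intro u₀ hdiff hint1 hint2 hE hgrad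
  set A : ℝ := ∫ x, ‖fderiv ℝ u₀ x‖ ^ 2 with hA_def
  set N : ℝ := ∫ x, ‖u₀ x‖ ^ ((2 * (d : ℝ)) / ((d : ℝ) - 2)) with hN_def
  set P : ℝ := Cd ^ (-(d:ℝ)) with hP_def
  have hPpos : 0 < P := Real.rpow_pos_of_pos hCd _
  have hN0 : 0 ≤ N := integral_nonneg fun x => Real.rpow_nonneg (norm_nonneg _) _
  have hAge : P ≤ A := by rw [← hCdW]; exact hgrad
  have hApos : 0 < A := lt_of_lt_of_le hPpos hAge
  rw [hCdW, hB] at hE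
  -- Sobolev bound
  have hsA := hsob u₀ hdiff hint1 hint2
  rw [← hA_def, ← hN_def] at hsA
  have hθ : (0:ℝ) < ((d:ℝ)-2)/(2*(d:ℝ)) := div_pos (by linarith) (by linarith)
  have hNle : N ≤ (Cd * Real.sqrt A) ^ ((2*(d:ℝ))/((d:ℝ)-2)) := by
    have hinv : (2*(d:ℝ))/((d:ℝ)-2) = (((d:ℝ)-2)/(2*(d:ℝ)))⁻¹ := by
      rw [inv_div]
    rw [hinv]
    exact (Real.le_rpow_inv_iff_of_pos hN0
      (mul_nonneg hCd.le (Real.sqrt_nonneg _)) hθ).mpr hsA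
  set t : ℝ := A * Cd ^ ((d:ℝ)) with ht_def
  have hQpos : 0 < Cd ^ ((d:ℝ)) := Real.rpow_pos_of_pos hCd _
  have htpos : 0 < t := mul_pos hApos hQpos
  have hPQ : P * Cd ^ ((d:ℝ)) = 1 := by
    rw [hP_def, ← Real.rpow_add hCd]
    norm_num
  have ht1 : 1 ≤ t := by
    calc (1:ℝ) = P * Cd ^ ((d:ℝ)) := hPQ.symm
      _ ≤ A * Cd ^ ((d:ℝ)) := mul_le_mul_of_nonneg_right hAge hQpos.le
  have hAt : A = t * P := by
    rw [ht_def, mul_assoc, mul_comm (Cd ^ ((d:ℝ))) P, hPQ, mul_one]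
  set s : ℝ := (d:ℝ)/((d:ℝ)-2) with hs_def
  -- rewrite the Sobolev RHS
  have hrhs : (Cd * Real.sqrt A) ^ ((2*(d:ℝ))/((d:ℝ)-2)) = P * t ^ s := by
    have h1 : (Cd * Real.sqrt A) ^ ((2*(d:ℝ))/((d:ℝ)-2))
        = ((Cd * Real.sqrt A) ^ (2:ℕ)) ^ s := by
      rw [← Real.rpow_natCast ((Cd * Real.sqrt A)) 2,
        ← Real.rpow_mul (mul_nonneg hCd.le (Real.sqrt_nonneg _))]
      congr 1
      push_cast
      rw [hs_def]
      ring
    have h2 : (Cd * Real.sqrt A) ^ (2:ℕ) = Cd ^ ((2:ℝ)-d) * t := by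
      calc (Cd * Real.sqrt A) ^ (2:ℕ) = Cd ^ (2:ℕ) * A := by
            rw [mul_pow, Real.sq_sqrt hApos.le]
        _ = Cd ^ ((2:ℝ)) * A := by rw [← Real.rpow_natCast Cd 2]; norm_num
        _ = Cd ^ ((2:ℝ)-d) * (A * Cd ^ ((d:ℝ))) := by
            rw [show Cd ^ ((2:ℝ)-d) * (A * Cd ^ ((d:ℝ)))
              = (Cd ^ ((2:ℝ)-d) * Cd ^ ((d:ℝ))) * A from by ring, ← Real.rpow_add hCd]
            ring_nf
        _ = Cd ^ ((2:ℝ)-d) * t := by rw [ht_def]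
    have h3 : (Cd ^ ((2:ℝ)-d) * t) ^ s = Cd ^ (((2:ℝ)-d)*s) * t ^ s := by
      rw [Real.mul_rpow (Real.rpow_pos_of_pos hCd _).le htpos.le, ← Real.rpow_mul hCd.le]
    have h4 : ((2:ℝ)-d)*s = -(d:ℝ) := by
      rw [hs_def]
      field_simp [show ((d:ℝ)-2) ≠ 0 from by linarith]
      ring
    rw [h1, h2, h3, h4, ← hP_def]
  have hNle2 : N ≤ P * t ^ s := by rw [← hrhs]; exact hNle
  -- first conclusion, by contradiction
  have hmain : (1 + δ₂) * P ≤ A := by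
    by_contra hcon
    push_neg at hcon
    have htlt : t < 1 + δ₂ := by
      calc t = A * Cd ^ ((d:ℝ)) := ht_def
        _ < ((1+δ₂) * P) * Cd ^ ((d:ℝ)) := by
            exact mul_lt_mul_of_pos_right hcon hQpos
        _ = (1+δ₂) * (P * Cd ^ ((d:ℝ))) := by ring
        _ = 1 + δ₂ := by rw [hPQ, mul_one]
    -- bound t ^ s
    have hs1 : s = 1 + 2/((d:ℝ)-2) := by
      rw [hs_def]
      field_simp [show ((d:ℝ)-2) ≠ 0 from by linarith]
      ring
    have hts : t ^ s ≤ t * (1 + 3*δ₂) := by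
      have e1 : t ^ s = t * t ^ (2/((d:ℝ)-2)) := by
        rw [hs1, Real.rpow_add htpos, Real.rpow_one]
      have e2 : t ^ (2/((d:ℝ)-2)) ≤ (1+δ₂) ^ (2/((d:ℝ)-2)) :=
        Real.rpow_le_rpow htpos.le htlt.le
          (div_nonneg (by norm_num) (by linarith))
      have e3 : (1+δ₂) ^ (2/((d:ℝ)-2)) ≤ (1+δ₂) ^ ((2:ℝ)) := by
        apply Real.rpow_le_rpow_of_exponent_le (by linarith)
        rw [div_le_iff₀ (by linarith : (0:ℝ) < (d:ℝ)-2)]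
        linarith
      have e4 : (1+δ₂) ^ ((2:ℝ)) ≤ 1 + 3*δ₂ := by
        rw [Real.rpow_two]
        nlinarith [hδ₂0.le, hδ₂1]
      calc t ^ s = t * t ^ (2/((d:ℝ)-2)) := e1
        _ ≤ t * (1 + 3*δ₂) := by
            apply mul_le_mul_of_nonneg_left _ htpos.le
            exact le_trans e2 (le_trans e3 e4)
    have hNle3 : N ≤ P * (t * (1 + 3*δ₂)) :=
      hNle2.trans (mul_le_mul_of_nonneg_left hts hPpos.le)
    -- lower bound on energy
    have hc12 : ((d:ℝ)-2)/(2*(d:ℝ)) ≤ 1/2 := by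
      rw [div_le_div_iff₀ (by linarith) (by norm_num)]
      linarith
    have hfacpos : 0 ≤ 1/(d:ℝ) - 3*(((d:ℝ)-2)/(2*(d:ℝ)))*δ₂ := by
      have h1 : 3*(((d:ℝ)-2)/(2*(d:ℝ)))*δ₂ ≤ (3/2)*δ₂ := by
        nlinarith [mul_nonneg (sub_nonneg.mpr hc12) hδ₂0.le]
      have h2 : (3/2)*δ₂ ≤ (3/2)*(1/(6*(d:ℝ))) := by linarith
      have h3 : (3/2)*(1/(6*(d:ℝ))) = 1/(4*(d:ℝ)) := by field_simp; ring
      have h4 : 1/(4*(d:ℝ)) ≤ 1/(d:ℝ) := by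
        apply div_le_div_of_nonneg_left (by norm_num) (by linarith) (by linarith)
      linarith
    have hElow : P * (1/(d:ℝ) - 3*(((d:ℝ)-2)/(2*(d:ℝ)))*δ₂)
        ≤ (1/2) * A - (((d:ℝ)-2)/(2*(d:ℝ))) * N := by
      have step1 : (1/2) * A - (((d:ℝ)-2)/(2*(d:ℝ))) * N
          ≥ (1/2) * (t*P) - (((d:ℝ)-2)/(2*(d:ℝ))) * (P * (t * (1 + 3*δ₂))) := by
        rw [← hAt]
        have := mul_le_mul_of_nonneg_left hNle3 hθ.le
        linarith
      have step2 : (1/2) * (t*P) - (((d:ℝ)-2)/(2*(d:ℝ))) * (P * (t * (1 + 3*δ₂)))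
          = P * t * (1/(d:ℝ) - 3*(((d:ℝ)-2)/(2*(d:ℝ)))*δ₂) := by
        field_simp
        ring
      have step3 : P * (1/(d:ℝ) - 3*(((d:ℝ)-2)/(2*(d:ℝ)))*δ₂)
          ≤ P * t * (1/(d:ℝ) - 3*(((d:ℝ)-2)/(2*(d:ℝ)))*δ₂) := by
        have : P * 1 ≤ P * t := mul_le_mul_of_nonneg_left ht1 hPpos.le
        nlinarith [hfacpos]
      linarith [step1, step2.symm.le, step3]
    -- upper bound from hypothesis
    have hEup : (1/2) * A - (((d:ℝ)-2)/(2*(d:ℝ))) * N ≤ (1-δ₀) * (P * (1/(d:ℝ))) := by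
      have : (1 - δ₀) * (1 / 2 * P - ((d:ℝ) - 2) / (2 * (d:ℝ)) * P)
          = (1-δ₀) * (P * (1/(d:ℝ))) := by
        field_simp
        ring
      rw [← this]
      exact hE
    have hcompare : P * (1/(d:ℝ) - 3*(((d:ℝ)-2)/(2*(d:ℝ)))*δ₂) ≤ P * ((1-δ₀) * (1/(d:ℝ))) := by
      calc P * (1/(d:ℝ) - 3*(((d:ℝ)-2)/(2*(d:ℝ)))*δ₂)
          ≤ (1/2) * A - (((d:ℝ)-2)/(2*(d:ℝ))) * N := hElow
        _ ≤ (1-δ₀) * (P * (1/(d:ℝ))) := hEup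
        _ = P * ((1-δ₀) * (1/(d:ℝ))) := by ring
    have hfinal : 1/(d:ℝ) - 3*(((d:ℝ)-2)/(2*(d:ℝ)))*δ₂ ≤ (1-δ₀) * (1/(d:ℝ)) :=
      le_of_mul_le_mul_left (by linarith [hcompare]) hPpos
    have hc12' : ((d:ℝ)-2)/(2*(d:ℝ)) ≤ 1/2 := by
      rw [div_le_div_iff₀ (by linarith) (by norm_num)]
      linarith
    have h1 : 3*(((d:ℝ)-2)/(2*(d:ℝ)))*δ₂ ≤ (3/2)*δ₂ := by
      nlinarith [mul_nonneg (sub_nonneg.mpr hc12') hδ₂0.le]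
    have h2 : δ₀ * (1/(d:ℝ)) ≤ (3/2)*δ₂ := by
      have : δ₀ * (1/(d:ℝ)) = 1/(d:ℝ) - (1-δ₀)*(1/(d:ℝ)) := by ring
      linarith
    have h3 : (3/2)*δ₂ ≤ (3/2)*(δ₀/(2*(d:ℝ))) := by linarith
    have h4 : (3/2)*(δ₀/(2*(d:ℝ))) = (3/4)*(δ₀*(1/(d:ℝ))) := by
      field_simp
      ring
    have h5 : 0 < δ₀ * (1/(d:ℝ)) := mul_pos hδ₀ (by positivity)
    linarith
  constructor
  · rw [hCdW]; exact hmain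
  · -- second conclusion
    have hid : A - N = (2*(d:ℝ)/((d:ℝ)-2)) * ((1/2)*A - (((d:ℝ)-2)/(2*(d:ℝ)))*N)
        - (2/((d:ℝ)-2)) * A := by
      field_simp [show ((d:ℝ)-2) ≠ 0 from by linarith, show (d:ℝ) ≠ 0 from by linarith]
      ring
    have hcoef : (0:ℝ) ≤ 2*(d:ℝ)/((d:ℝ)-2) := div_nonneg (by linarith) (by linarith)
    have hEup : (1/2) * A - (((d:ℝ)-2)/(2*(d:ℝ))) * N ≤ (1-δ₀) * (P * (1/(d:ℝ))) := by
      have : (1 - δ₀) * (1 / 2 * P - ((d:ℝ) - 2) / (2 * (d:ℝ)) * P)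
          = (1-δ₀) * (P * (1/(d:ℝ))) := by
        field_simp
        ring
      rw [← this]
      exact hE
    have hA2 : (2/((d:ℝ)-2)) * ((1+δ₂)*P) ≤ (2/((d:ℝ)-2)) * A :=
      mul_le_mul_of_nonneg_left hmain (div_nonneg (by norm_num) (by linarith))
    have hB2 : (2*(d:ℝ)/((d:ℝ)-2)) * ((1/2)*A - (((d:ℝ)-2)/(2*(d:ℝ)))*N)
        ≤ (2*(d:ℝ)/((d:ℝ)-2)) * ((1-δ₀) * (P * (1/(d:ℝ)))) :=
      mul_le_mul_of_nonneg_left hEup hcoef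
    have hstep : (2*(d:ℝ)/((d:ℝ)-2)) * ((1-δ₀) * (P * (1/(d:ℝ))))
        - (2/((d:ℝ)-2)) * ((1+δ₂)*P) = (2*P/((d:ℝ)-2)) * ((1-δ₀) - (1+δ₂)) := by
      field_simp [show ((d:ℝ)-2) ≠ 0 from by linarith, show (d:ℝ) ≠ 0 from by linarith]
    have hstep2 : (2*P/((d:ℝ)-2)) * ((1-δ₀) - (1+δ₂)) ≤ (2*P/((d:ℝ)-2)) * (-δ₂) := by
      apply mul_le_mul_of_nonneg_left (by linarith)
      exact div_nonneg (by linarith [hPpos.le]) (by linarith)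
    have hstep3 : (2*P/((d:ℝ)-2)) * (-δ₂) = -(2 * δ₂) / (((d : ℝ) - 2) * Cd ^ (d : ℝ)) := by
      rw [hP_def, Real.rpow_neg hCd.le]
      field_simp
    calc A - N = (2*(d:ℝ)/((d:ℝ)-2)) * ((1/2)*A - (((d:ℝ)-2)/(2*(d:ℝ)))*N)
          - (2/((d:ℝ)-2)) * A := hid
      _ ≤ (2*(d:ℝ)/((d:ℝ)-2)) * ((1-δ₀) * (P * (1/(d:ℝ))))
          - (2/((d:ℝ)-2)) * ((1+δ₂)*P) := by linarith
      _ = (2*P/((d:ℝ)-2)) * ((1-δ₀) - (1+δ₂)) := hstep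
      _ ≤ (2*P/((d:ℝ)-2)) * (-δ₂) := hstep2
      _ = -(2 * δ₂) / (((d : ℝ) - 2) * Cd ^ (d : ℝ)) := hstep3
end
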